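/- Let a, b, c, b₀, c₁ be real numbers with c₁ > 0, |c| ≤ c₁, 0 < b₀ ≤ |b|, and |a| ≤ b₀²/(4c₁). Then there exists a real number x* with a·(x*)² + b·x* + c = 0 and |x*| ≤ 2c₁/b₀. -/

import Mathlib

/-- Under the stated coefficient bounds, the quadratic
`a x² + b x + c` has a real root `x*` with `|x*| ≤ 2c₁/b₀`. -/
theorem quadratic_root_bound
    (a b c b₀ c₁ : ℝ) (hc₁ : 0 < c₁) (hc : |c| ≤ c₁)
    (hb₀ : 0 < b₀) (hb : b₀ ≤ |b|) (ha : |a| ≤ b₀ ^ 2 / (4 * c₁)) :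
    ∃ x : ℝ, a * x ^ 2 + b * x + c = 0 ∧ |x| ≤ 2 * c₁ / b₀ := by
  have hac : |a| * |c| ≤ b₀ ^ 2 / 4 := by
    have h1 : |a| * |c| ≤ (b₀ ^ 2 / (4 * c₁)) * c₁ :=
      mul_le_mul ha hc (abs_nonneg c) (by positivity)
    have h2 : (b₀ ^ 2 / (4 * c₁)) * c₁ = b₀ ^ 2 / 4 := by field_simp
    linarith
  have hD : 0 ≤ b ^ 2 - 4 * a * c := by
    nlinarith [le_abs_self (a * c), abs_mul a c, sq_abs b,
      sq_nonneg (|b| - b₀)]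
  have hsq := Real.sqrt_nonneg (b ^ 2 - 4 * a * c)
  obtain ⟨s, hs2, habs⟩ : ∃ s : ℝ, s ^ 2 = b ^ 2 - 4 * a * c ∧
      |b + s| = |b| + Real.sqrt (b ^ 2 - 4 * a * c) := by
    rcases le_or_gt 0 b with h | h
    · exact ⟨Real.sqrt (b ^ 2 - 4 * a * c), Real.sq_sqrt hD, by
        rw [abs_of_nonneg (by positivity), abs_of_nonneg h]⟩
    · refine ⟨-Real.sqrt (b ^ 2 - 4 * a * c), by rw [neg_pow]; simp [Real.sq_sqrt hD], ?_⟩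
      rw [abs_of_nonpos (by linarith), abs_of_neg h]; ring
  have hdge : b₀ ≤ |b + s| := by rw [habs]; linarith
  have hd0 : b + s ≠ 0 := by
    intro h; rw [h, abs_zero] at hdge; linarith
  refine ⟨-(2 * c) / (b + s), ?_, ?_⟩
  · have h : (b + s) ^ 2 ≠ 0 := pow_ne_zero _ hd0
    field_simp
    linear_combination c * hs2
  · rw [abs_div, abs_neg, abs_mul, abs_two]
    exact div_le_div₀ (by positivity) (by linarith) hb₀ hdge
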